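/- For every l ∈ H' the solution operator 𝒮 : ℝ^n_+ → H, 𝒮(σ) := u_σ^l, is Fréchet differentiable at every σ ∈ ℝ^n_+, and its derivative 𝒮'(σ) ∈ L(ℝ^n, H) is characterized as follows: for every τ ∈ ℝ^n, the element 𝒮'(σ)τ ∈ H is the unique solution of b_σ(𝒮'(σ)τ, w) = −Σ_{i=1}^n τ_i b_i(u_σ^l, w) for all w ∈ H. -/

import Mathlib

open scoped BigOperators
open InnerProductSpace
open scoped RealInnerProductSpace Topology

set_option maxHeartbeats 1000000 in
set_option synthInstance.maxHeartbeats 1000000 in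
theorem stmt_3
    {H : Type*} [NormedAddCommGroup H] [InnerProductSpace ℝ H] [CompleteSpace H]
    {n : ℕ}
    (b0 : H →L[ℝ] H →L[ℝ] ℝ) (b : Fin n → H →L[ℝ] H →L[ℝ] ℝ)
    (hb0symm : ∀ u v : H, b0 u v = b0 v u)
    (hb0pos : ∀ v : H, 0 ≤ b0 v v)
    (hbsymm : ∀ i, ∀ u v : H, b i u v = b i v u)
    (hbpos : ∀ i, ∀ v : H, 0 ≤ b i v v)
    (C β : ℝ) (hβ : 0 < β) (hCβ : β ≤ C)
    (hcoer : ∀ v : H, β * ‖v‖ ^ 2 ≤ b0 v v + ∑ i, b i v v)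
    (hbound : ∀ v : H, b0 v v + ∑ i, b i v v ≤ C * ‖v‖ ^ 2)
    (l : H →L[ℝ] ℝ) (S : (Fin n → ℝ) → H)
    (hS : ∀ σ : Fin n → ℝ, (∀ i, 0 < σ i) →
      ∀ v : H, b0 (S σ) v + ∑ i, σ i * b i (S σ) v = l v) :
    ∀ σ : Fin n → ℝ, (∀ i, 0 < σ i) →
      ∃ S' : (Fin n → ℝ) →L[ℝ] H, HasFDerivAt S S' σ ∧
        ∀ τ : Fin n → ℝ, ∀ x : H,
          ((∀ w : H, b0 x w + ∑ i, σ i * b i x w =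
              -(∑ i, τ i * b i (S σ) w)) ↔ x = S' τ) := by
  classical
  intro σ hσ
  set y : H := (toDual ℝ H).symm l with hy
  set Bop : Fin n → (H →L[ℝ] H) := fun i => continuousLinearMapOfBilin (𝕜 := ℝ) (b i) with hBop
  set B0 : H →L[ℝ] H := continuousLinearMapOfBilin (𝕜 := ℝ) b0 with hB0
  set A : (Fin n → ℝ) → (H →L[ℝ] H) := fun s => B0 + ∑ i, s i • Bop i with hA
  have hAinner : ∀ (s : Fin n → ℝ) (u v : H),
      ⟪A s u, v⟫ = b0 u v + ∑ i, s i * b i u v := by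
    intro s u v
    simp [hA, hB0, hBop, ContinuousLinearMap.sum_apply, inner_add_left, sum_inner,
      real_inner_smul_left, continuousLinearMapOfBilin_apply]
  -- invertibility of `A s` for positive `s`
  have hunit : ∀ s : Fin n → ℝ, (∀ i, 0 < s i) →
      ∃ u : (H →L[ℝ] H)ˣ, (u : H →L[ℝ] H) = A s := by
    intro s hs
    set Bs : H →L[ℝ] H →L[ℝ] ℝ := b0 + ∑ i, s i • b i with hBs
    have hBs_apply : ∀ u v : H, Bs u v = b0 u v + ∑ i, s i * b i u v := by
      intro u v
      simp [hBs, ContinuousLinearMap.sum_apply]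
    have hco : IsCoercive Bs := by
      obtain ⟨m, hm0, hm1, hms⟩ : ∃ m : ℝ, 0 < m ∧ m ≤ 1 ∧ ∀ i, m ≤ s i := by
        refine ⟨(insert (1:ℝ) (Finset.univ.image s)).inf'
          (Finset.insert_nonempty _ _) id, ?_, ?_, ?_⟩
        · rw [Finset.lt_inf'_iff]
          intro c hc
          rcases Finset.mem_insert.1 hc with rfl | hc
          · exact one_pos
          · obtain ⟨i, _, rfl⟩ := Finset.mem_image.1 hc
            exact hs i
        · exact Finset.inf'_le _ (Finset.mem_insert_self _ _)
        · intro i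
          exact Finset.inf'_le _
            (Finset.mem_insert_of_mem (Finset.mem_image_of_mem s (Finset.mem_univ i)))
      refine ⟨m * β, by positivity, fun u => ?_⟩
      have h1 : m * (b0 u u + ∑ i, b i u u) ≤ Bs u u := by
        rw [hBs_apply, mul_add]
        refine add_le_add (mul_le_of_le_one_left (hb0pos u) hm1) ?_
        rw [Finset.mul_sum]
        exact Finset.sum_le_sum fun i _ =>
          mul_le_mul_of_nonneg_right (hms i) (hbpos i u)
      have h2 : m * (β * ‖u‖ ^ 2) ≤ m * (b0 u u + ∑ i, b i u u) :=
        mul_le_mul_of_nonneg_left (hcoer u) hm0.le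
      nlinarith [h1, h2]
    have hAe : ∀ v w : H, ⟪hco.continuousLinearEquivOfBilin v, w⟫ = ⟪A s v, w⟫ := by
      intro v w
      rw [hco.continuousLinearEquivOfBilin_apply, hAinner, hBs_apply]
    refine ⟨hco.continuousLinearEquivOfBilin.toUnit, ?_⟩
    ext v
    exact ext_inner_right ℝ fun w => hAe v w
  -- `A s (S s) = y` for positive `s`
  have hAy : ∀ s : Fin n → ℝ, (∀ i, 0 < s i) → A s (S s) = y := by
    intro s hs
    refine ext_inner_right ℝ fun v => ?_
    rw [hAinner, hS s hs v, hy]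
    exact (toDual_symm_apply).symm
  obtain ⟨u, hu⟩ := hunit σ hσ
  -- derivative of A
  set A' : (Fin n → ℝ) →L[ℝ] (H →L[ℝ] H) :=
    ∑ i, (ContinuousLinearMap.proj i : (Fin n → ℝ) →L[ℝ] ℝ).smulRight (Bop i) with hA'
  have hA'apply : ∀ τ : Fin n → ℝ, A' τ = ∑ i, τ i • Bop i := by
    intro τ
    simp [hA', ContinuousLinearMap.sum_apply]
  have hA'inner : ∀ (τ : Fin n → ℝ) (z w : H), ⟪A' τ z, w⟫ = ∑ i, τ i * b i z w := by
    intro τ z w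
    rw [hA'apply]
    simp [hBop, ContinuousLinearMap.sum_apply, sum_inner, real_inner_smul_left,
      continuousLinearMapOfBilin_apply]
  have hderivA : HasFDerivAt A A' σ := by
    have h := (hasFDerivAt_const B0 σ).fun_add
      (HasFDerivAt.fun_sum fun i (_ : i ∈ Finset.univ) =>
        (hasFDerivAt_apply (𝕜 := ℝ) i σ).smul_const (Bop i))
    simpa [hA', hA] using h
  set ev : (H →L[ℝ] H) →L[ℝ] H := ContinuousLinearMap.apply ℝ H y with hev
  set D : (H →L[ℝ] H) →L[ℝ] (H →L[ℝ] H) :=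
    -(ContinuousLinearMap.mulLeftRight ℝ (H →L[ℝ] H) ↑u⁻¹ ↑u⁻¹) with hD
  have hinv : HasFDerivAt Ring.inverse D (A σ) := by
    have h := hasFDerivAt_ringInverse (𝕜 := ℝ) u
    rwa [hu] at h
  set S' : (Fin n → ℝ) →L[ℝ] H := ev.comp (D.comp A') with hS'def
  have hF : HasFDerivAt (fun s => ev (Ring.inverse (A s))) S' σ :=
    ev.hasFDerivAt.comp σ (hinv.comp σ hderivA)
  have hopen : IsOpen {s : Fin n → ℝ | ∀ i, 0 < s i} := by
    have he : {s : Fin n → ℝ | ∀ i, 0 < s i} = ⋂ i, {s | 0 < s i} := by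
      ext; simp [Set.mem_iInter]
    rw [he]
    exact isOpen_iInter_of_finite fun i =>
      isOpen_lt continuous_const (continuous_apply i)
  have hSval : ∀ s : Fin n → ℝ, (∀ i, 0 < s i) → S s = ev (Ring.inverse (A s)) := by
    intro s hs
    obtain ⟨v, hv⟩ := hunit s hs
    have h1 : Ring.inverse (A s) = (↑v⁻¹ : H →L[ℝ] H) := by
      rw [← hv, Ring.inverse_unit]
    have h2 : ev (Ring.inverse (A s)) = (↑v⁻¹ : H →L[ℝ] H) y := by rw [h1]; rfl
    rw [h2, ← hAy s hs, ← hv]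
    calc S s = ((↑v⁻¹ * ↑v : H →L[ℝ] H)) (S s) := by rw [Units.inv_mul]; rfl
      _ = (↑v⁻¹ : H →L[ℝ] H) ((↑v : H →L[ℝ] H) (S s)) := rfl
  have hSF : S =ᶠ[𝓝 σ] fun s => ev (Ring.inverse (A s)) := by
    filter_upwards [hopen.mem_nhds hσ] with s hs
    exact hSval s hs
  have hderivS : HasFDerivAt S S' σ := hF.congr_of_eventuallyEq hSF
  refine ⟨S', hderivS, ?_⟩
  have hSσ : S σ = (↑u⁻¹ : H →L[ℝ] H) y := by
    rw [hSval σ hσ, ← hu, Ring.inverse_unit]; rfl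
  intro τ x
  have hS'τ : S' τ = -((↑u⁻¹ : H →L[ℝ] H) ((A' τ) (S σ))) := by
    have : S' τ = ev (D (A' τ)) := rfl
    rw [this, hD]
    rw [ContinuousLinearMap.neg_apply, map_neg, ContinuousLinearMap.mulLeftRight_apply]
    have : ev ((↑u⁻¹ : H →L[ℝ] H) * A' τ * ↑u⁻¹) =
        (↑u⁻¹ : H →L[ℝ] H) ((A' τ) ((↑u⁻¹ : H →L[ℝ] H) y)) := rfl
    rw [this, hSσ]
  have hAS'τ : A σ (S' τ) = -((A' τ) (S σ)) := by
    rw [hS'τ, map_neg, ← hu]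
    congr 1
    calc (↑u : H →L[ℝ] H) ((↑u⁻¹ : H →L[ℝ] H) ((A' τ) (S σ)))
        = ((↑u * ↑u⁻¹ : H →L[ℝ] H)) ((A' τ) (S σ)) := rfl
      _ = (A' τ) (S σ) := by rw [Units.mul_inv]; rfl
  constructor
  · intro hx
    have h1 : A σ x = -((A' τ) (S σ)) := by
      refine ext_inner_right ℝ fun w => ?_
      rw [hAinner, hx w, inner_neg_left, hA'inner]
    have h2 : x = (↑u⁻¹ : H →L[ℝ] H) (A σ x) := by
      rw [← hu]
      calc x = ((↑u⁻¹ * ↑u : H →L[ℝ] H)) x := by rw [Units.inv_mul]; rfl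
        _ = (↑u⁻¹ : H →L[ℝ] H) ((↑u : H →L[ℝ] H) x) := rfl
    rw [h2, h1, hS'τ, map_neg]
  · intro hx w
    subst hx
    have h1 : ⟪A σ (S' τ), w⟫ = b0 (S' τ) w + ∑ i, σ i * b i (S' τ) w := hAinner σ _ w
    rw [← h1, hAS'τ, inner_neg_left, hA'inner]
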